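/- For α > 0, x ≥ 0 and real y with 0 < y < 1, the series G_α(x,y) := Σ_{n=0}^∞ G_{α+n}(x) y^n converges and equals (1-y)^{-1} (G_α(x) - y^{1-α} e^{(y-1)x} G_α(xy)). -/

import Mathlib

noncomputable def G (β x : ℝ) : ℝ := (1 / Real.Gamma β) * ∫ t in (0:ℝ)..x, Real.exp (-t) * t ^ (β - 1)

open Real MeasureTheory Filter Finset Set Topology

lemma G_integrable {β x : ℝ} (hβ : 0 < β) (hx : 0 ≤ x) :
    IntervalIntegrable (fun t => Real.exp (-t) * t ^ (β - 1)) volume 0 x := by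
  rw [intervalIntegrable_iff_integrableOn_Ioc_of_le hx]
  exact (Real.GammaIntegral_convergent hβ).mono_set Ioc_subset_Ioi_self

lemma G_ofReal {β x : ℝ} (hx : 0 ≤ x) :
    ((∫ t in (0:ℝ)..x, Real.exp (-t) * t ^ (β - 1) : ℝ) : ℂ) = Complex.partialGamma β x := by
  rw [Complex.partialGamma, ← intervalIntegral.integral_ofReal]
  apply intervalIntegral.integral_congr
  intro t ht
  rw [Set.uIcc_of_le hx] at ht
  push_cast
  rw [Complex.ofReal_cpow ht.1]
  push_cast
  ring

lemma G_rec {β x : ℝ} (hβ : 0 < β) (hx : 0 ≤ x) :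
    G (β + 1) x = G β x - Real.exp (-x) * x ^ β / Real.Gamma (β + 1) := by
  have hΓ : 0 < Real.Gamma β := Real.Gamma_pos_of_pos hβ
  have key := Complex.partialGamma_add_one (s := (β : ℂ)) (by simpa using hβ) hx
  have h1 : ((∫ t in (0:ℝ)..x, Real.exp (-t) * t ^ (β + 1 - 1) : ℝ) : ℂ)
      = Complex.partialGamma ((β : ℂ) + 1) x := by
    rw [G_ofReal hx]; norm_cast
  have h2 : ((β * (∫ t in (0:ℝ)..x, Real.exp (-t) * t ^ (β - 1)) - Real.exp (-x) * x ^ β : ℝ) : ℂ)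
      = (β : ℂ) * Complex.partialGamma (β : ℂ) x - ((Real.exp (-x) : ℝ) : ℂ) * (x : ℂ) ^ (β : ℂ) := by
    push_cast [← Complex.ofReal_cpow hx]
    rw [G_ofReal hx]
  have h3 : (∫ t in (0:ℝ)..x, Real.exp (-t) * t ^ (β + 1 - 1))
      = β * (∫ t in (0:ℝ)..x, Real.exp (-t) * t ^ (β - 1)) - Real.exp (-x) * x ^ β := by
    have := h1.trans (key.trans h2.symm)
    exact_mod_cast this
  have hΓ1 : Real.Gamma (β + 1) = β * Real.Gamma β := Real.Gamma_add_one (ne_of_gt hβ)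
  rw [G, G, h3, hΓ1]
  field_simp

lemma G_nonneg {β x : ℝ} (hβ : 0 < β) (hx : 0 ≤ x) : 0 ≤ G β x := by
  have hΓ : 0 < Real.Gamma β := Real.Gamma_pos_of_pos hβ
  apply mul_nonneg (by positivity)
  apply intervalIntegral.integral_nonneg hx
  intro t ht
  have : 0 ≤ t := ht.1
  positivity

lemma G_le {β x : ℝ} (hβ : 0 < β) (hx : 0 ≤ x) : G β x ≤ x ^ β / Real.Gamma (β + 1) := by
  have hΓ : 0 < Real.Gamma β := Real.Gamma_pos_of_pos hβ
  have h1 : (∫ t in (0:ℝ)..x, Real.exp (-t) * t ^ (β - 1)) ≤ ∫ t in (0:ℝ)..x, t ^ (β - 1) := by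
    apply intervalIntegral.integral_mono_on hx (G_integrable hβ hx)
      (intervalIntegral.intervalIntegrable_rpow' (by linarith))
    intro t ht
    have h2 : Real.exp (-t) ≤ 1 := Real.exp_le_one_iff.mpr (by linarith [ht.1])
    have h3 : (0:ℝ) ≤ t ^ (β - 1) := Real.rpow_nonneg ht.1 _
    nlinarith
  have h2 : (∫ t in (0:ℝ)..x, t ^ (β - 1)) = x ^ β / β := by
    rw [integral_rpow (Or.inl (by linarith))]
    rw [show β - 1 + 1 = β by ring, Real.zero_rpow (ne_of_gt hβ), sub_zero]
    try norm_num
  have hΓ1 : Real.Gamma (β + 1) = β * Real.Gamma β := Real.Gamma_add_one (ne_of_gt hβ)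
  rw [G, hΓ1]
  calc 1 / Real.Gamma β * ∫ t in (0:ℝ)..x, Real.exp (-t) * t ^ (β - 1)
      ≤ 1 / Real.Gamma β * (x ^ β / β) := by
        apply mul_le_mul_of_nonneg_left _ (by positivity)
        rw [← h2]; exact h1
    _ = x ^ β / (β * Real.Gamma β) := by
        rw [one_div, ← div_eq_inv_mul, div_div, mul_comm]

lemma G_partial {β z : ℝ} (hβ : 0 < β) (hz : 0 ≤ z) (n : ℕ) :
    G (β + n) z = G β z - Real.exp (-z) *
      ∑ k ∈ Finset.range n, z ^ (β + k) / Real.Gamma (β + k + 1) := by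
  induction n with
  | zero => simp
  | succ n ih =>
    have h1 : (β + ((n : ℕ) + 1 : ℕ) : ℝ) = (β + n) + 1 := by push_cast; ring
    have hpos : (0:ℝ) < β + n := by positivity
    rw [h1, G_rec hpos hz, ih, Finset.sum_range_succ]
    ring

lemma a_summable {β z : ℝ} (hβ : 0 < β) (hz : 0 < z) :
    Summable (fun k : ℕ => z ^ (β + k) / Real.Gamma (β + k + 1)) := by
  apply summable_of_ratio_norm_eventually_le (r := 1/2) (by norm_num)
  filter_upwards [Filter.eventually_ge_atTop ⌈2*z⌉₊] with n hn
  have hn' : (2*z : ℝ) ≤ n := le_trans (Nat.le_ceil _) (by exact_mod_cast hn)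
  have hpos : (0:ℝ) < β + n + 1 := by positivity
  have hΓpos : 0 < Real.Gamma (β + n + 1) := Real.Gamma_pos_of_pos (by positivity)
  have e1 : z ^ (β + ((n : ℕ) + 1 : ℕ)) = z ^ (β + n) * z := by
    push_cast
    rw [show (β + ((n:ℝ) + 1)) = (β + n) + 1 by ring, Real.rpow_add hz, Real.rpow_one]
  have e2 : Real.Gamma (β + ((n : ℕ) + 1 : ℕ) + 1) = (β + n + 1) * Real.Gamma (β + n + 1) := by
    push_cast
    rw [show (β + ((n:ℝ) + 1) + 1) = (β + n + 1) + 1 by ring,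
      Real.Gamma_add_one (ne_of_gt hpos)]
  have hzle : z / (β + n + 1) ≤ 1/2 := by
    rw [div_le_iff₀ hpos]; nlinarith
  have key : z ^ (β + ((n : ℕ) + 1 : ℕ)) / Real.Gamma (β + ((n : ℕ) + 1 : ℕ) + 1)
      = (z / (β + n + 1)) * (z ^ (β + n) / Real.Gamma (β + n + 1)) := by
    rw [e1, e2]; field_simp
  have hz1 : (0:ℝ) < z ^ (β + (n:ℝ)) := Real.rpow_pos_of_pos hz _
  rw [Real.norm_eq_abs, Real.norm_eq_abs, key,
    abs_of_nonneg (by positivity), abs_of_nonneg (by positivity)]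
  exact mul_le_mul_of_nonneg_right hzle (by positivity)

lemma hasSum_a {β z : ℝ} (hβ : 0 < β) (hz : 0 < z) :
    HasSum (fun k : ℕ => z ^ (β + k) / Real.Gamma (β + k + 1)) (Real.exp z * G β z) := by
  have hnn : ∀ k : ℕ, 0 ≤ z ^ (β + (k:ℝ)) / Real.Gamma (β + k + 1) := by
    intro k
    have h1 : (0:ℝ) < z ^ (β + (k:ℝ)) := Real.rpow_pos_of_pos hz _
    have h2 : 0 < Real.Gamma (β + k + 1) := Real.Gamma_pos_of_pos (by positivity)
    positivity
  rw [hasSum_iff_tendsto_nat_of_nonneg hnn]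
  have hGtend : Tendsto (fun n : ℕ => G (β + n) z) atTop (𝓝 0) := by
    apply squeeze_zero (fun n => G_nonneg (by positivity) hz.le)
      (fun n => G_le (by positivity) hz.le)
    exact (a_summable hβ hz).tendsto_atTop_zero
  have hform : ∀ n : ℕ, ∑ k ∈ Finset.range n, z ^ (β + k) / Real.Gamma (β + k + 1)
      = Real.exp z * (G β z - G (β + n) z) := by
    intro n
    have h := G_partial hβ hz.le n
    have hne : Real.exp (-z) ≠ 0 := Real.exp_ne_zero _
    have h2 : Real.exp (-z) * ∑ k ∈ Finset.range n, z ^ (β + k) / Real.Gamma (β + k + 1)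
        = G β z - G (β + n) z := by linarith
    rw [← h2, ← mul_assoc, ← Real.exp_add]
    simp
  simp_rw [hform]
  have := ((hGtend.const_sub (G β z)).const_mul (Real.exp z))
  simpa using this

theorem stmt_2 (α x y : ℝ) (hα : 0 < α) (hx : 0 ≤ x) (hy0 : 0 < y) (hy1 : y < 1) :
    HasSum (fun n : ℕ => G (α + n) x * y ^ n)
      ((1 - y)⁻¹ * (G α x - y ^ (1 - α) * Real.exp ((y - 1) * x) * G α (x * y))) := by
  rcases hx.eq_or_lt with rfl | hx0
  · simpa [G] using (hasSum_zero : HasSum (fun _ : ℕ => (0:ℝ)) 0)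
  have hxy : 0 < x * y := mul_pos hx0 hy0
  have h1y : (0:ℝ) < 1 - y := by linarith
  -- the two series for the Cauchy product
  set b : ℕ → ℝ := fun k => x ^ (α + k) / Real.Gamma (α + k + 1) * y ^ k with hb_def
  set c : ℕ → ℝ := fun m => if m = 0 then (0:ℝ) else y ^ m with hc_def
  have hbnn : ∀ k, 0 ≤ b k := by
    intro k
    have h1 : (0:ℝ) < x ^ (α + (k:ℝ)) := Real.rpow_pos_of_pos hx0 _
    have h2 : 0 < Real.Gamma (α + k + 1) := Real.Gamma_pos_of_pos (by positivity)
    have h3 : (0:ℝ) ≤ y ^ k := pow_nonneg hy0.le _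
    positivity
  have hcnn : ∀ m, 0 ≤ c m := by
    intro m
    by_cases hm : m = 0 <;> simp [hc_def, hm, pow_nonneg hy0.le]
  have hasSum_b : HasSum b (y ^ (-α) * (Real.exp (x * y) * G α (x * y))) := by
    have h := (hasSum_a hα hxy).mul_left (y ^ (-α))
    convert h using 1
    · rfl
    funext k
    have e1 : (x * y) ^ (α + (k:ℝ)) = x ^ (α + (k:ℝ)) * y ^ (α + (k:ℝ)) :=
      Real.mul_rpow hx0.le hy0.le
    have e2 : y ^ (-α) * y ^ (α + (k:ℝ)) = y ^ k := by
      rw [← Real.rpow_add hy0, show -α + (α + (k:ℝ)) = (k:ℝ) by ring, Real.rpow_natCast]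
    calc b k = (y ^ (-α) * y ^ (α + (k:ℝ))) * x ^ (α + (k:ℝ)) / Real.Gamma (α + k + 1) := by
          rw [e2]; simp only [hb_def]; ring
      _ = y ^ (-α) * ((x * y) ^ (α + (k:ℝ)) / Real.Gamma (α + k + 1)) := by rw [e1]; ring
  have hasSum_c : HasSum c (y * (1 - y)⁻¹) := by
    have hgeo : HasSum (fun m : ℕ => y ^ m) (1 - y)⁻¹ :=
      hasSum_geometric_of_lt_one hy0.le hy1
    have hone : HasSum (fun m : ℕ => if m = 0 then (1:ℝ) else 0) 1 := hasSum_ite_eq 0 1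
    have h := hgeo.sub hone
    have hval : (1 - y)⁻¹ - 1 = y * (1 - y)⁻¹ := by field_simp; ring
    rw [hval] at h
    convert h using 1
    · rfl
    funext m
    by_cases hm : m = 0 <;> simp [hc_def, hm]
  -- Cauchy product
  have hbn : Summable fun k => ‖b k‖ := by
    simpa [Real.norm_eq_abs, fun k => abs_of_nonneg (hbnn k)] using hasSum_b.summable
  have hcn : Summable fun m => ‖c m‖ := by
    simpa [Real.norm_eq_abs, fun m => abs_of_nonneg (hcnn m)] using hasSum_c.summable
  have hcp := hasSum_sum_range_mul_of_summable_norm hbn hcn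
  rw [hasSum_b.tsum_eq, hasSum_c.tsum_eq] at hcp
  -- identify the Cauchy product terms
  have hterm : ∀ n : ℕ, ∑ k ∈ Finset.range (n+1), b k * c (n - k)
      = (∑ k ∈ Finset.range n, x ^ (α + k) / Real.Gamma (α + k + 1)) * y ^ n := by
    intro n
    rw [Finset.sum_range_succ]
    have hc0 : c (n - n) = 0 := by simp [hc_def]
    rw [hc0, mul_zero, add_zero, Finset.sum_mul]
    apply Finset.sum_congr rfl
    intro k hk
    have hkn : k < n := Finset.mem_range.mp hk
    have hne : n - k ≠ 0 := Nat.sub_ne_zero_of_lt hkn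
    simp only [hb_def, hc_def, if_neg hne]
    rw [mul_assoc, ← pow_add, Nat.add_sub_cancel' hkn.le]
  simp_rw [hterm] at hcp
  -- assemble
  have hgeo : HasSum (fun n : ℕ => y ^ n) (1 - y)⁻¹ :=
    hasSum_geometric_of_lt_one hy0.le hy1
  have hfinal := (hgeo.mul_left (G α x)).sub (hcp.mul_left (Real.exp (-x)))
  convert hfinal using 1
  · rfl
  · funext n
    rw [G_partial hα hx0.le n]
    ring
  · have e1 : Real.exp (-x) * Real.exp (x * y) = Real.exp ((y - 1) * x) := by
      rw [← Real.exp_add]; ring_nf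
    have e2 : y ^ (-α) * y = y ^ (1 - α) := by
      rw [show (1 - α) = -α + 1 by ring, Real.rpow_add hy0, Real.rpow_one]
    calc (1 - y)⁻¹ * (G α x - y ^ (1 - α) * Real.exp ((y - 1) * x) * G α (x * y))
        = G α x * (1 - y)⁻¹ - (y ^ (1 - α) * Real.exp ((y - 1) * x)) * G α (x * y) * (1 - y)⁻¹ := by
          ring
      _ = G α x * (1 - y)⁻¹ -
          Real.exp (-x) * (y ^ (-α) * (Real.exp (x * y) * G α (x * y)) * (y * (1 - y)⁻¹)) := by
          rw [← e1, ← e2]; ring
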